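/- Let 0 < α < 1, g > 0, and constants x₀, u₀, y₀, v₀ ∈ ℝ. Define for t > 0: x(t) = x₀ + u₀·t^α/α and y(t) = y₀ + v₀·t^α/α − g·t^{2α}/(2α²). Then for every t > 0, x and y are twice continuously differentiable and satisfy t^{1−α}·(t^{1−α}·x′(t))′ = 0 and t^{1−α}·(t^{1−α}·y′(t))′ = −g; that is, (x(t), y(t)) solves the equations of motion under gravity, m·D^{2α}x = 0 and m·D^{2α}y = −mg, for the fractional derivative induced by p(t,h,α) = t + t^{1−α}h. -/

import Mathlib

open Filter Topology Set

/-- Let `0 < α < 1`, `g > 0`, and `x₀, u₀, y₀, v₀ ∈ ℝ`. The functions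
`x t = x₀ + u₀·t^α/α` and `y t = y₀ + v₀·t^α/α - g·t^{2α}/(2α²)` are twice continuously
differentiable on `t > 0` and satisfy `t^{1-α}·(t^{1-α}·x')' = 0` and
`t^{1-α}·(t^{1-α}·y')' = -g` there; that is, `(x, y)` solves the fractional equations of
motion under gravity `m·D^{2α}x = 0`, `m·D^{2α}y = -m·g` for the fractional derivative
induced by `p(t,h,α) = t + t^{1-α}·h`. -/
theorem fractional_motion_under_gravity
    (α g x₀ u₀ y₀ v₀ : ℝ) (hα0 : 0 < α) (hα1 : α < 1) (hg : 0 < g) (x y : ℝ → ℝ)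
    (hx : ∀ t : ℝ, 0 < t → x t = x₀ + u₀ * t ^ α / α)
    (hy : ∀ t : ℝ, 0 < t → y t = y₀ + v₀ * t ^ α / α - g * t ^ (2 * α) / (2 * α ^ 2)) :
    ContDiffOn ℝ 2 x (Ioi 0) ∧ ContDiffOn ℝ 2 y (Ioi 0) ∧
    ∃ x' y' u' v' : ℝ → ℝ,
      (∀ t : ℝ, 0 < t → HasDerivAt x (x' t) t) ∧
      (∀ t : ℝ, 0 < t → HasDerivAt y (y' t) t) ∧
      (∀ t : ℝ, 0 < t → HasDerivAt (fun s : ℝ => s ^ (1 - α) * x' s) (u' t) t) ∧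
      (∀ t : ℝ, 0 < t → HasDerivAt (fun s : ℝ => s ^ (1 - α) * y' s) (v' t) t) ∧
      (∀ t : ℝ, 0 < t → t ^ (1 - α) * u' t = 0 ∧ t ^ (1 - α) * v' t = -g) := by
  have hαne : α ≠ 0 := ne_of_gt hα0
  -- ContDiffOn parts
  have hcx : ContDiffOn ℝ 2 x (Ioi 0) := by
    apply ContDiffOn.congr (f := fun t : ℝ => x₀ + u₀ * t ^ α / α)
    · intro t ht
      exact ((contDiffAt_const.add
        (((Real.contDiffAt_rpow_const_of_ne (ne_of_gt ht)).const_smul u₀).div_const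
          α)).contDiffWithinAt)
    · intro t ht; exact hx t ht
  have hcy : ContDiffOn ℝ 2 y (Ioi 0) := by
    apply ContDiffOn.congr
      (f := fun t : ℝ => y₀ + v₀ * t ^ α / α - g * t ^ (2 * α) / (2 * α ^ 2))
    · intro t ht
      exact ((contDiffAt_const.add
        (((Real.contDiffAt_rpow_const_of_ne (ne_of_gt ht)).const_smul v₀).div_const α)).sub
        (((Real.contDiffAt_rpow_const_of_ne (ne_of_gt ht)).const_smul g).div_const
          (2 * α ^ 2))).contDiffWithinAt
    · intro t ht; exact hy t ht
  refine ⟨hcx, hcy, fun t => u₀ * t ^ (α - 1),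
    fun t => v₀ * t ^ (α - 1) - g * t ^ (2 * α - 1) / α,
    fun _ => 0, fun t => -g * t ^ (α - 1), ?_, ?_, ?_, ?_, ?_⟩
  · -- derivative of x
    intro t ht
    have h1 : HasDerivAt (fun s : ℝ => x₀ + u₀ * s ^ α / α) (u₀ * t ^ (α - 1)) t := by
      have h2 := ((Real.hasDerivAt_rpow_const (p := α) (Or.inl (ne_of_gt ht))).const_mul
        u₀).div_const α
      have := (hasDerivAt_const t x₀).add h2
      refine this.congr_deriv ?_
      field_simp; ring
    refine h1.congr_of_eventuallyEq ?_
    filter_upwards [Ioi_mem_nhds ht] with s hs using hx s hs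
  · -- derivative of y
    intro t ht
    have h1 : HasDerivAt (fun s : ℝ => y₀ + v₀ * s ^ α / α - g * s ^ (2 * α) / (2 * α ^ 2))
        (v₀ * t ^ (α - 1) - g * t ^ (2 * α - 1) / α) t := by
      have h2 := ((Real.hasDerivAt_rpow_const (p := α) (Or.inl (ne_of_gt ht))).const_mul
        v₀).div_const α
      have h3 := ((Real.hasDerivAt_rpow_const (p := 2 * α) (Or.inl (ne_of_gt ht))).const_mul
        g).div_const (2 * α ^ 2)
      have := ((hasDerivAt_const t y₀).add h2).sub h3
      refine this.congr_deriv ?_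
      field_simp; ring
    refine h1.congr_of_eventuallyEq ?_
    filter_upwards [Ioi_mem_nhds ht] with s hs using hy s hs
  · -- derivative of t^{1-α} x'
    intro t ht
    have h1 : HasDerivAt (fun _ : ℝ => u₀) (0 : ℝ) t := hasDerivAt_const t u₀
    refine h1.congr_of_eventuallyEq ?_
    filter_upwards [Ioi_mem_nhds ht] with s hs
    have : s ^ (1 - α) * (u₀ * s ^ (α - 1)) = u₀ * (s ^ (1 - α) * s ^ (α - 1)) := by ring
    rw [this, ← Real.rpow_add hs]
    norm_num
  · -- derivative of t^{1-α} y'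
    intro t ht
    have h1 : HasDerivAt (fun s : ℝ => v₀ - g * s ^ α / α) (-g * t ^ (α - 1)) t := by
      have h2 := ((Real.hasDerivAt_rpow_const (p := α) (Or.inl (ne_of_gt ht))).const_mul
        g).div_const α
      have := (hasDerivAt_const t v₀).sub h2
      refine this.congr_deriv ?_
      field_simp; ring
    refine h1.congr_of_eventuallyEq ?_
    filter_upwards [Ioi_mem_nhds ht] with s hs
    have : s ^ (1 - α) * (v₀ * s ^ (α - 1) - g * s ^ (2 * α - 1) / α)
        = v₀ * (s ^ (1 - α) * s ^ (α - 1)) - g * (s ^ (1 - α) * s ^ (2 * α - 1)) / α := by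
      ring
    rw [this, ← Real.rpow_add hs, ← Real.rpow_add hs]
    norm_num
    ring_nf
  · intro t ht
    constructor
    · simp
    · have h : t ^ (1 - α) * (-g * t ^ (α - 1)) = -g * (t ^ (1 - α) * t ^ (α - 1)) := by ring
      rw [h, ← Real.rpow_add ht]
      norm_num
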